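/- arXiv:1407.4869 — 5 statements merged into one kernel-verified Lean document; each statement's English description precedes it below -/
import Mathlib

section
/- Let G be a finite simple graph that is not bipartite. Then every weak IASI f of G has at least one mono-indexed edge, i.e., there exists an edge uv of G with |f(u)| = |f(v)| = 1. -/
open Finset SimpleGraph
open scoped Pointwise

/-- `f` is a weak integer additive set-indexer (weak IASI) of the simple graph `G`:
an injective assignment of nonempty finite sets of non-negative integers to vertices
whose induced sumset-labeling of edges is injective, and such that the set-indexing
number of every edge equals the maximum of those of its end vertices. -/
structure IsWeakIASI {V : Type*} (G : SimpleGraph V) (f : V → Finset ℕ) : Prop where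
  nonempty : ∀ v : V, (f v).Nonempty
  injective : Function.Injective f
  edgeInjective : ∀ ⦃u v x y : V⦄, G.Adj u v → G.Adj x y →
    f u + f v = f x + f y → s(u, v) = s(x, y)
  weak : ∀ ⦃u v : V⦄, G.Adj u v → (f u + f v).card = max (f u).card (f v).card

open scoped Classical in
/-- The number of mono-indexed edges of `G` under the vertex labeling `f`, i.e. the
number of edges both of whose end vertices receive singleton set-labels. -/
noncomputable def monoEdgeCount {V : Type*} [Fintype V] (G : SimpleGraph V)
    (f : V → Finset ℕ) : ℕ :=
  (G.edgeFinset.filter fun e => ∀ v ∈ e, (f v).card = 1).card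

/-- The set of numbers of mono-indexed edges over all weak IASIs of `G`; the sparing
number of `G` is the least element of this set. -/
noncomputable def monoCounts {V : Type*} [Fintype V] (G : SimpleGraph V) : Set ℕ :=
  {k : ℕ | ∃ f : V → Finset ℕ, IsWeakIASI G f ∧ monoEdgeCount G f = k}

/-- A simple graph is bipartite if its vertices split into two parts such that every
edge has one end in each part. -/
def IsBipartite {V : Type*} (G : SimpleGraph V) : Prop :=
  ∃ A : Set V, ∀ ⦃u v : V⦄, G.Adj u v → (u ∈ A ↔ v ∉ A)

/-- If a finite simple graph `G` is not bipartite, then every weak IASI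
of `G` has at least one mono-indexed edge. -/
theorem exists_monoIndexed_edge_of_not_bipartite {V : Type*} [Fintype V]
    (G : SimpleGraph V) (hG : ¬ _root_.IsBipartite G)
    (f : V → Finset ℕ) (hf : IsWeakIASI G f) :
    ∃ u v : V, G.Adj u v ∧ (f u).card = 1 ∧ (f v).card = 1 := by
  by_contra h
  push_neg at h
  apply hG
  refine ⟨{v | (f v).card = 1}, fun u v huv => ?_⟩
  have hcd := cauchy_davenport_add_of_linearOrder_isCancelAdd (hf.nonempty u) (hf.nonempty v)
  rw [hf.weak huv] at hcd
  have hu1 : 1 ≤ (f u).card := Finset.card_pos.2 (hf.nonempty u)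
  have hv1 : 1 ≤ (f v).card := Finset.card_pos.2 (hf.nonempty v)
  have hmin : (f u).card = 1 ∨ (f v).card = 1 := by
    rcases le_total (f u).card (f v).card with hle | hle
    · left; omega
    · right; omega
  have hnb := h u v huv
  simp only [Set.mem_setOf_eq]
  constructor
  · intro hu hv; exact hnb hu hv
  · intro hv
    rcases hmin with h1 | h1
    · exact h1
    · exact absurd h1 hv
end

section
/- Every finite bipartite simple graph G admits a weak IASI with no mono-indexed edges; equivalently, the sparing number of a bipartite graph is 0. -/
open Finset SimpleGraph
open scoped Pointwise

/-- Every finite bipartite simple graph admits a weak IASI with no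
mono-indexed edges; equivalently, the sparing number of a bipartite graph is `0`. -/
theorem sparing_number_of_bipartite {V : Type*} [Fintype V]
    (G : SimpleGraph V) (hG : _root_.IsBipartite G) :
    (∃ f : V → Finset ℕ, IsWeakIASI G f ∧ monoEdgeCount G f = 0) ∧
      IsLeast (monoCounts G) 0 := by
  classical
  obtain ⟨A, hA⟩ := hG
  set n := Fintype.card V with hn
  set i : V → ℕ := fun v => ((Fintype.equivFin V) v : ℕ) with hi
  have hilt : ∀ v : V, i v < n := fun v => ((Fintype.equivFin V) v).isLt
  have hiinj : Function.Injective i := fun a b h =>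
    (Fintype.equivFin V).injective (Fin.ext h)
  have hnpos : ∀ _ : V, 0 < n := fun v => Fintype.card_pos_iff.mpr ⟨v⟩
  set f : V → Finset ℕ := fun v =>
    if v ∈ A then {i v} else {n * (i v + 1), n * (i v + 1) + n ^ 2} with hf
  -- explicit computation of the sumset of an edge
  have hsum : ∀ u v : V, u ∈ A → v ∉ A →
      f u + f v = {i u + n * (i v + 1), i u + n * (i v + 1) + n ^ 2} := by
    intro u v hu hv
    simp only [hf, if_pos hu, if_neg hv, Finset.singleton_add, Finset.vadd_finset_insert,
      Finset.vadd_finset_singleton, vadd_eq_add, ← add_assoc]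
  -- a pair {x, x+T} determines x
  have hpair : ∀ x y T : ℕ, 0 < T → ({x, x + T} : Finset ℕ) = {y, y + T} → x = y := by
    intro x y T hT h
    have m1 : x ∈ ({y, y + T} : Finset ℕ) := h ▸ Finset.mem_insert_self _ _
    have m2 : y ∈ ({x, x + T} : Finset ℕ) := h.symm ▸ Finset.mem_insert_self _ _
    simp only [Finset.mem_insert, Finset.mem_singleton] at m1 m2
    omega
  -- decoding sums
  have hdecode : ∀ a b c d : ℕ, a < n → c < n →
      a + n * b = c + n * d → a = c ∧ b = d := by
    intro a b c d ha hc h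
    have h1 : (a + n * b) % n = (c + n * d) % n := by rw [h]
    rw [Nat.add_mul_mod_self_left, Nat.add_mul_mod_self_left,
      Nat.mod_eq_of_lt ha, Nat.mod_eq_of_lt hc] at h1
    subst h1
    refine ⟨rfl, ?_⟩
    have h2 := Nat.add_left_cancel h
    exact Nat.eq_of_mul_eq_mul_left (Nat.lt_of_le_of_lt (Nat.zero_le a) ha) h2
  have key : ∀ u v x y : V, u ∈ A → v ∉ A → x ∈ A → y ∉ A →
      f u + f v = f x + f y → u = x ∧ v = y := by
    intro u v x y hu hv hx hy heq
    rw [hsum u v hu hv, hsum x y hx hy] at heq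
    have hT : 0 < n ^ 2 := by have := hnpos u; positivity
    have hmin := hpair _ _ _ hT heq
    obtain ⟨h1, h2⟩ := hdecode _ _ _ _ (hilt u) (hilt x) hmin
    exact ⟨hiinj h1, hiinj (by omega : i v = i y)⟩
  have hcard1 : ∀ v ∈ A, (f v).card = 1 := by
    intro v hv; simp only [hf, if_pos hv, Finset.card_singleton]
  have hcard2 : ∀ v, v ∉ A → (f v).card = 2 := by
    intro v hv
    simp only [hf, if_neg hv]
    refine Finset.card_pair ?_
    have h0 := hnpos v
    have hT : 0 < n ^ 2 := by positivity
    omega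
  have hW : IsWeakIASI G f := by
    constructor
    · intro v
      by_cases hv : v ∈ A <;> simp [hf, hv]
    · intro a b h
      by_cases ha : a ∈ A <;> by_cases hb : b ∈ A
      · simp only [hf, if_pos ha, if_pos hb, Finset.singleton_inj] at h
        exact hiinj h
      · exfalso
        have c1 := hcard1 a ha
        have c2 := hcard2 b hb
        rw [h] at c1; omega
      · exfalso
        have c1 := hcard2 a ha
        have c2 := hcard1 b hb
        rw [h] at c1; omega
      · simp only [hf, if_neg ha, if_neg hb] at h
        have hT : 0 < n ^ 2 := by have := hnpos a; positivity
        have hmin := hpair _ _ _ hT h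
        have h0 := hnpos a
        have : i a + 1 = i b + 1 := Nat.eq_of_mul_eq_mul_left h0 hmin
        exact hiinj (by omega)
    · intro u v x y huv hxy heq
      have h1 := hA huv
      have h2 := hA hxy
      by_cases hu : u ∈ A <;> by_cases hx : x ∈ A
      · have hv : v ∉ A := h1.mp hu
        have hy : y ∉ A := h2.mp hx
        obtain ⟨e1, e2⟩ := key u v x y hu hv hx hy heq
        rw [e1, e2]
      · have hv : v ∉ A := h1.mp hu
        have hy : y ∈ A := not_not.mp (fun h => hx (h2.mpr h))
        obtain ⟨e1, e2⟩ := key u v y x hu hv hy hx (by rw [heq, add_comm])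
        rw [e1, e2]; exact Sym2.eq_swap
      · have hv : v ∈ A := not_not.mp (fun h => hu (h1.mpr h))
        have hy : y ∉ A := h2.mp hx
        obtain ⟨e1, e2⟩ := key v u x y hv hu hx hy (by rw [add_comm (f v) (f u), heq])
        rw [← e1, ← e2]; exact Sym2.eq_swap
      · have hv : v ∈ A := not_not.mp (fun h => hu (h1.mpr h))
        have hy : y ∈ A := not_not.mp (fun h => hx (h2.mpr h))
        obtain ⟨e1, e2⟩ := key v u y x hv hu hy hx
          (by rw [add_comm (f v) (f u), heq, add_comm])
        rw [e1, e2]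
    · intro u v huv
      have h1 := hA huv
      by_cases hu : u ∈ A
      · have hv : v ∉ A := h1.mp hu
        rw [hsum u v hu hv, hcard1 u hu, hcard2 v hv]
        have hT : 0 < n ^ 2 := by have := hnpos u; positivity
        rw [Finset.card_pair (by omega)]; simp
      · have hv : v ∈ A := not_not.mp (fun h => hu (h1.mpr h))
        rw [add_comm (f u) (f v), hsum v u hv hu, hcard1 v hv, hcard2 u hu]
        have hT : 0 < n ^ 2 := by have := hnpos u; positivity
        rw [Finset.card_pair (by omega)]; simp
  have hmono : monoEdgeCount G f = 0 := by
    rw [monoEdgeCount, Finset.card_eq_zero, Finset.filter_eq_empty_iff]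
    intro e he
    rw [SimpleGraph.mem_edgeFinset] at he
    induction e using Sym2.ind with
    | _ u v =>
      rw [SimpleGraph.mem_edgeSet] at he
      intro hall
      have h1 := hA he
      by_cases hu : u ∈ A
      · have hv : v ∉ A := h1.mp hu
        have := hall v (by simp [Sym2.mem_iff])
        rw [hcard2 v hv] at this; omega
      · have := hall u (by simp [Sym2.mem_iff])
        rw [hcard2 u hu] at this; omega
  exact ⟨⟨f, hW, hmono⟩, ⟨⟨f, hW, hmono⟩, fun k _ => Nat.zero_le k⟩⟩
end

section
/- Let C_n be the cycle on n ≥ 3 vertices and let f be any weak IASI of C_n. If n is odd, then the number of mono-indexed edges of C_n under f is odd; if n is even, then the number of mono-indexed edges of C_n under f is even. -/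
open Finset SimpleGraph
open scoped Pointwise

/-- In a weak IASI, every edge has at least one end with a singleton label. -/
lemma IsWeakIASI.singleton_of_adj {V : Type*} {G : SimpleGraph V} {f : V → Finset ℕ}
    (hf : IsWeakIASI G f) {u v : V} (h : G.Adj u v) :
    (f u).card = 1 ∨ (f v).card = 1 := by
  have h1 := hf.weak h
  have h2 : (f u).card + (f v).card - 1 ≤ (f u + f v).card :=
    cauchy_davenport_add_of_linearOrder_isCancelAdd (hf.nonempty u) (hf.nonempty v)
  have hu := (hf.nonempty u).card_pos
  have hv := (hf.nonempty v).card_pos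
  rw [h1] at h2
  omega

/-- For any weak IASI of the cycle `Cₙ` (`n ≥ 3`), the number of
mono-indexed edges is odd when `n` is odd and even when `n` is even. -/
theorem monoEdgeCount_parity_cycle (n : ℕ) (hn : 3 ≤ n)
    (f : Fin n → Finset ℕ) (hf : IsWeakIASI (cycleGraph n) f) :
    (Odd n → Odd (monoEdgeCount (cycleGraph n) f)) ∧
      (Even n → Even (monoEdgeCount (cycleGraph n) f)) := by
  classical
  obtain ⟨m, rfl⟩ : ∃ m, n = m + 3 := ⟨n - 3, by omega⟩
  have hadj : ∀ i : Fin (m + 3), (cycleGraph (m + 3)).Adj i (i + 1) := by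
    intro i
    rw [cycleGraph_adj']
    right
    rw [add_sub_cancel_left]
    rfl
  have key : ∀ i : Fin (m + 3), (f i).card = 1 ∨ (f (i + 1)).card = 1 :=
    fun i => hf.singleton_of_adj (hadj i)
  set T : Finset (Fin (m + 3)) :=
    univ.filter (fun i => (f i).card = 1 ∧ (f (i + 1)).card = 1) with hT
  -- two distinct consecutive-pair edges give distinct `Sym2` elements
  have hinj : ∀ i j : Fin (m + 3), s(i, i + 1) = s(j, j + 1) → i = j := by
    intro i j hij
    rw [Sym2.eq_iff] at hij
    rcases hij with ⟨h, -⟩ | ⟨h1, h2⟩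
    · exact h
    · exfalso
      have h3 : i = i + 1 + 1 := by rw [← h2] at h1; exact h1
      rw [add_assoc] at h3
      have h4 := congrArg Fin.val (left_eq_add.mp h3)
      have h5 : ((1 : Fin (m + 3))).val = 1 := rfl
      rw [Fin.val_add, h5, Fin.val_zero, Nat.mod_eq_of_lt (by omega)] at h4
      omega
  have hcount : monoEdgeCount (cycleGraph (m + 3)) f = T.card := by
    rw [monoEdgeCount]
    refine (Finset.card_bij (fun i _ => s(i, i + 1)) ?_ ?_ ?_).symm
    · intro i hi
      rw [hT, mem_filter] at hi
      simp only [mem_filter, mem_edgeFinset, mem_edgeSet]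
      refine ⟨hadj i, ?_⟩
      intro v hv
      rw [Sym2.mem_iff] at hv
      rcases hv with rfl | rfl
      · exact hi.2.1
      · exact hi.2.2
    · intro i _ j _ hij
      exact hinj i j hij
    · intro e he
      induction e using Sym2.ind with
      | _ u v =>
        simp only [mem_filter, mem_edgeFinset, mem_edgeSet] at he
        obtain ⟨hadjuv, hcards⟩ := he
        have hu1 : (f u).card = 1 := hcards u (by simp)
        have hv1 : (f v).card = 1 := hcards v (by simp)
        rw [cycleGraph_adj'] at hadjuv
        rcases hadjuv with h | h
        · -- u - v = 1, so u = v + 1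
          have huv : u = v + 1 := by
            have h' : u - v = 1 := Fin.ext h
            rw [sub_eq_iff_eq_add] at h'
            rw [h']; exact add_comm 1 v
          refine ⟨v, ?_, ?_⟩
          · rw [hT, mem_filter]
            exact ⟨mem_univ v, hv1, huv ▸ hu1⟩
          · show s(v, v + 1) = s(u, v)
            rw [← huv]; exact Sym2.eq_swap
        · -- v - u = 1, so v = u + 1
          have hvu : v = u + 1 := by
            have h' : v - u = 1 := Fin.ext h
            rw [sub_eq_iff_eq_add] at h'
            rw [h']; exact add_comm 1 u
          refine ⟨u, ?_, ?_⟩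
          · rw [hT, mem_filter]
            exact ⟨mem_univ u, hu1, hvu ▸ hv1⟩
          · show s(u, u + 1) = s(u, v)
            rw [← hvu]
  -- now parity counting
  set A : Finset (Fin (m + 3)) := univ.filter (fun i => ¬ (f i).card = 1) with hA
  set A' : Finset (Fin (m + 3)) := univ.filter (fun i => ¬ (f (i + 1)).card = 1) with hA'
  have hdisj : Disjoint A A' := by
    rw [Finset.disjoint_left]
    intro i hiA hiA'
    rw [hA, mem_filter] at hiA
    rw [hA', mem_filter] at hiA'
    rcases key i with h | h
    · exact hiA.2 h
    · exact hiA'.2 h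
  have hsplit : T.card + (A ∪ A').card = m + 3 := by
    have h1 : A ∪ A' = univ.filter (fun i : Fin (m + 3) =>
        ¬ ((f i).card = 1 ∧ (f (i + 1)).card = 1)) := by
      rw [hA, hA', ← filter_or]
      congr 1
      ext i
      tauto
    rw [hT, h1, card_filter_add_card_filter_not, card_univ, Fintype.card_fin]
  have hAA' : A'.card = A.card := by
    refine Finset.card_bij (fun i _ => i + 1) ?_ ?_ ?_
    · intro i hi
      rw [hA', mem_filter] at hi
      rw [hA, mem_filter]
      exact ⟨mem_univ _, hi.2⟩
    · intro i _ j _ hij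
      exact add_right_cancel hij
    · intro j hj
      rw [hA, mem_filter] at hj
      refine ⟨j - 1, ?_, by simp⟩
      rw [hA', mem_filter]
      simpa using hj.2
  have hunion : (A ∪ A').card = 2 * A.card := by
    rw [card_union_of_disjoint hdisj, hAA']
    ring
  have hmain : T.card + 2 * A.card = m + 3 := by rw [← hunion]; exact hsplit
  rw [hcount]
  constructor
  · rintro ⟨k, hk⟩
    exact ⟨k - A.card, by omega⟩
  · rintro ⟨k, hk⟩
    exact ⟨k - A.card, by omega⟩
end

section
/- The sparing number of the complete graph K_n is (n−1)(n−2)/2. -/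
open Finset SimpleGraph
open scoped Pointwise

private lemma two_pow_add_false {a b c d : ℕ} (hab : a < b) (hc : a < c) (hd : a < d)
    (h : 2 ^ a + 2 ^ b = 2 ^ c + 2 ^ d) : False := by
  have h1 : (2:ℕ) ^ (a + 1) ∣ 2 ^ c + 2 ^ d :=
    dvd_add (pow_dvd_pow 2 hc) (pow_dvd_pow 2 hd)
  rw [← h] at h1
  have h2 : (2:ℕ) ^ (a + 1) ∣ 2 ^ b := pow_dvd_pow 2 hab
  have h3 : (2:ℕ) ^ (a + 1) ∣ 2 ^ a := by
    have := Nat.dvd_sub h1 h2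
    simpa using this
  have h4 := Nat.le_of_dvd (pow_pos (by norm_num) a) h3
  have h5 : (2:ℕ) ^ a < 2 ^ (a + 1) := Nat.pow_lt_pow_right one_lt_two (Nat.lt_succ_self a)
  omega

private lemma two_pow_add_lt {a b c d : ℕ} (hab : a < b) (hcd : c < d)
    (h : 2 ^ a + 2 ^ b = 2 ^ c + 2 ^ d) : a = c ∧ b = d := by
  have hac : a = c := by
    by_contra hne
    rcases Nat.lt_or_ge a c with h1 | h1
    · exact two_pow_add_false hab h1 (h1.trans hcd) h
    · have h1' : c < a := by omega
      exact two_pow_add_false hcd h1' (h1'.trans hab) h.symm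
  subst hac
  have hbd : (2:ℕ) ^ b = 2 ^ d := by omega
  exact ⟨rfl, Nat.pow_right_injective (by norm_num) hbd⟩

private lemma two_pow_add_sym {a b c d : ℕ} (hab : a ≠ b) (hcd : c ≠ d)
    (h : 2 ^ a + 2 ^ b = 2 ^ c + 2 ^ d) : (a = c ∧ b = d) ∨ (a = d ∧ b = c) := by
  rcases hab.lt_or_gt with h1 | h1 <;> rcases hcd.lt_or_gt with h2 | h2
  · exact Or.inl (two_pow_add_lt h1 h2 h)
  · have := two_pow_add_lt h1 h2 (by omega)
    exact Or.inr ⟨this.1, this.2⟩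
  · have := two_pow_add_lt h1 h2 (by omega)
    exact Or.inr ⟨this.2, this.1⟩
  · have := two_pow_add_lt h1 h2 (by omega)
    exact Or.inl ⟨this.2, this.1⟩

open scoped Classical in
private lemma count_edges_in {n : ℕ} (T : Finset (Fin n)) :
    (((⊤ : SimpleGraph (Fin n)).edgeFinset).filter fun e => ∀ v ∈ e, v ∈ T).card
      = T.card.choose 2 := by
  classical
  have hset : (((⊤ : SimpleGraph (Fin n)).edgeFinset).filter fun e => ∀ v ∈ e, v ∈ T)
      = T.sym2.filter fun e => ¬ e.IsDiag := by
    ext e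
    induction e using Sym2.ind with
    | _ x y =>
      simp only [mem_filter, mem_edgeFinset, mem_edgeSet, top_adj, Sym2.mem_iff,
        Finset.mk_mem_sym2_iff, Sym2.mk_isDiag_iff]
      constructor
      · rintro ⟨hne, hmem⟩
        exact ⟨⟨hmem x (Or.inl rfl), hmem y (Or.inr rfl)⟩, hne⟩
      · rintro ⟨⟨hx, hy⟩, hne⟩
        refine ⟨hne, ?_⟩
        rintro v (rfl | rfl) <;> assumption
  rw [hset]
  have hdiag : (T.sym2.filter fun e => e.IsDiag).card = T.card := by
    symm
    refine Finset.card_bij (fun v _ => s(v, v)) ?_ ?_ ?_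
    · intro a ha
      simp [Finset.mk_mem_sym2_iff, ha]
    · intro a _ b _ hab
      have := Sym2.eq_iff.mp hab
      tauto
    · intro e he
      induction e using Sym2.ind with
      | _ x y =>
        simp only [mem_filter, Finset.mk_mem_sym2_iff, Sym2.mk_isDiag_iff] at he
        obtain ⟨⟨hx, _⟩, rfl⟩ := he
        exact ⟨x, hx, rfl⟩
  have hsplit := Finset.card_filter_add_card_filter_not
    (s := T.sym2) (p := fun e => e.IsDiag)
  have hcard : T.sym2.card = (T.card + 1).choose 2 := Finset.card_sym2 T
  have hch : (T.card + 1).choose 2 = T.card.choose 1 + T.card.choose 2 :=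
    Nat.choose_succ_succ T.card 1
  rw [Nat.choose_one_right] at hch
  omega

private lemma pair_add_singleton (M b : ℕ) :
    ({0, M} : Finset ℕ) + ({b} : Finset ℕ) = {b, M + b} := by
  ext x
  simp only [Finset.mem_add, Finset.mem_insert, Finset.mem_singleton]
  constructor
  · rintro ⟨y, (rfl | rfl), z, rfl, rfl⟩
    · simp
    · simp
  · rintro (h | h)
    · exact ⟨0, Or.inl rfl, b, rfl, by omega⟩
    · exact ⟨M, Or.inr rfl, b, rfl, by omega⟩

private lemma pair_eq_pair {M A B : ℕ} (hM : 0 < M)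
    (h : ({A, M + A} : Finset ℕ) = {B, M + B}) : A = B := by
  have h1 : A ∈ ({B, M + B} : Finset ℕ) := h ▸ Finset.mem_insert_self _ _
  have h2 : B ∈ ({A, M + A} : Finset ℕ) := h ▸ Finset.mem_insert_self _ _
  simp only [Finset.mem_insert, Finset.mem_singleton] at h1 h2
  omega

private def specF (n : ℕ) : Fin n → Finset ℕ :=
  fun i => if (i : ℕ) = n - 1 then {0, 2 ^ n} else {2 ^ (i : ℕ)}

private lemma two_pow_pos (n : ℕ) : 0 < 2 ^ n := pow_pos (by norm_num) n

private lemma specF_card {n : ℕ} (i : Fin n) :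
    (specF n i).card = if (i : ℕ) = n - 1 then 2 else 1 := by
  unfold specF
  split
  · exact Finset.card_pair (by have := two_pow_pos n; omega)
  · simp

private lemma specF_isWeak (n : ℕ) : IsWeakIASI (⊤ : SimpleGraph (Fin n)) (specF n) := by
  have hp : ∀ (a b : Fin n), (a : ℕ) = n - 1 → (b : ℕ) = n - 1 → a = b :=
    fun a b ha hb => Fin.ext (by omega)
  constructor
  · intro v
    unfold specF
    split
    · exact ⟨0, by simp⟩
    · simp
  · intro u v h
    unfold specF at h
    by_cases hu : (u : ℕ) = n - 1 <;> by_cases hv : (v : ℕ) = n - 1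
    · exact hp u v hu hv
    · rw [if_pos hu, if_neg hv] at h
      have h0 : (0 : ℕ) ∈ ({2 ^ (v : ℕ)} : Finset ℕ) := h ▸ Finset.mem_insert_self _ _
      rw [Finset.mem_singleton] at h0
      have := two_pow_pos (v : ℕ); omega
    · rw [if_neg hu, if_pos hv] at h
      have h0 : (0 : ℕ) ∈ ({2 ^ (u : ℕ)} : Finset ℕ) := h ▸ Finset.mem_insert_self _ _
      rw [Finset.mem_singleton] at h0
      have := two_pow_pos (u : ℕ); omega
    · rw [if_neg hu, if_neg hv, Finset.singleton_inj] at h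
      exact Fin.ext (Nat.pow_right_injective (by norm_num) h)
  · intro u v x y huv hxy h
    rw [top_adj] at huv hxy
    unfold specF at h
    have hvne : (u : ℕ) ≠ (v : ℕ) := fun hc => huv (Fin.ext hc)
    have hyne : (x : ℕ) ≠ (y : ℕ) := fun hc => hxy (Fin.ext hc)
    by_cases hu : (u : ℕ) = n - 1 <;> by_cases hv : (v : ℕ) = n - 1 <;>
      by_cases hx : (x : ℕ) = n - 1 <;> by_cases hy : (y : ℕ) = n - 1
    -- (T,T,*,*) : impossible
    all_goals (try exact absurd (hp u v hu hv) huv)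
    all_goals (try exact absurd (hp x y hx hy) hxy)
    -- case hu, ¬hv, hx, ¬hy
    · rw [if_pos hu, if_neg hv, if_pos hx, if_neg hy, pair_add_singleton,
        pair_add_singleton] at h
      obtain rfl : v = y := Fin.ext (Nat.pow_right_injective (by norm_num)
        (pair_eq_pair (two_pow_pos n) h))
      obtain rfl : u = x := hp u x hu hx
      rfl
    -- case hu, ¬hv, ¬hx, hy
    · rw [if_pos hu, if_neg hv, if_neg hx, if_pos hy,
        add_comm ({2 ^ (x : ℕ)} : Finset ℕ), pair_add_singleton, pair_add_singleton] at h
      obtain rfl : v = x := Fin.ext (Nat.pow_right_injective (by norm_num)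
        (pair_eq_pair (two_pow_pos n) h))
      obtain rfl : u = y := hp u y hu hy
      exact Sym2.eq_swap
    -- case hu, ¬hv, ¬hx, ¬hy : card contradiction
    · rw [if_pos hu, if_neg hv, if_neg hx, if_neg hy, pair_add_singleton,
        Finset.singleton_add_singleton] at h
      have hc := congrArg Finset.card h
      rw [Finset.card_pair (by have := two_pow_pos n; omega), Finset.card_singleton] at hc
      omega
    -- case ¬hu, hv, hx, ¬hy
    · rw [if_neg hu, if_pos hv, if_pos hx, if_neg hy,
        add_comm ({2 ^ (u : ℕ)} : Finset ℕ), pair_add_singleton, pair_add_singleton] at h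
      obtain rfl : u = y := Fin.ext (Nat.pow_right_injective (by norm_num)
        (pair_eq_pair (two_pow_pos n) h))
      obtain rfl : v = x := hp v x hv hx
      exact Sym2.eq_swap
    -- case ¬hu, hv, ¬hx, hy
    · rw [if_neg hu, if_pos hv, if_neg hx, if_pos hy,
        add_comm ({2 ^ (u : ℕ)} : Finset ℕ), add_comm ({2 ^ (x : ℕ)} : Finset ℕ),
        pair_add_singleton, pair_add_singleton] at h
      obtain rfl : u = x := Fin.ext (Nat.pow_right_injective (by norm_num)
        (pair_eq_pair (two_pow_pos n) h))
      obtain rfl : v = y := hp v y hv hy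
      rfl
    -- case ¬hu, hv, ¬hx, ¬hy : card contradiction
    · rw [if_neg hu, if_pos hv, if_neg hx, if_neg hy,
        add_comm ({2 ^ (u : ℕ)} : Finset ℕ), pair_add_singleton,
        Finset.singleton_add_singleton] at h
      have hc := congrArg Finset.card h
      rw [Finset.card_pair (by have := two_pow_pos n; omega), Finset.card_singleton] at hc
      omega
    -- case ¬hu, ¬hv, hx, ¬hy : card contradiction
    · rw [if_neg hu, if_neg hv, if_pos hx, if_neg hy, pair_add_singleton,
        Finset.singleton_add_singleton] at h
      have hc := congrArg Finset.card h
      rw [Finset.card_pair (by have := two_pow_pos n; omega), Finset.card_singleton] at hc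
      omega
    -- case ¬hu, ¬hv, ¬hx, hy : card contradiction
    · rw [if_neg hu, if_neg hv, if_neg hx, if_pos hy,
        add_comm ({2 ^ (x : ℕ)} : Finset ℕ), pair_add_singleton,
        Finset.singleton_add_singleton] at h
      have hc := congrArg Finset.card h
      rw [Finset.card_pair (by have := two_pow_pos n; omega), Finset.card_singleton] at hc
      omega
    -- case all non-special
    · rw [if_neg hu, if_neg hv, if_neg hx, if_neg hy, Finset.singleton_add_singleton,
        Finset.singleton_add_singleton, Finset.singleton_inj] at h
      rcases two_pow_add_sym hvne hyne h with ⟨h1, h2⟩ | ⟨h1, h2⟩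
      · obtain rfl : u = x := Fin.ext h1
        obtain rfl : v = y := Fin.ext h2
        rfl
      · obtain rfl : u = y := Fin.ext h1
        obtain rfl : v = x := Fin.ext h2
        exact Sym2.eq_swap
  · intro u v hadj
    rw [top_adj] at hadj
    unfold specF
    by_cases hu : (u : ℕ) = n - 1 <;> by_cases hv : (v : ℕ) = n - 1
    · exact absurd (hp u v hu hv) hadj
    · rw [if_pos hu, if_neg hv, pair_add_singleton,
        Finset.card_pair (by have := two_pow_pos n; omega),
        Finset.card_pair (by have := two_pow_pos n; omega), Finset.card_singleton]
      decide
    · rw [if_neg hu, if_pos hv, add_comm, pair_add_singleton,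
        Finset.card_pair (by have := two_pow_pos n; omega),
        Finset.card_pair (by have := two_pow_pos n; omega), Finset.card_singleton]
      decide
    · rw [if_neg hu, if_neg hv, Finset.singleton_add_singleton, Finset.card_singleton,
        Finset.card_singleton, Finset.card_singleton]
      decide

open scoped Classical in
private lemma mono_count_eq {n : ℕ} (f : Fin n → Finset ℕ) (T : Finset (Fin n))
    (hT : ∀ v, v ∈ T ↔ (f v).card = 1) :
    monoEdgeCount (⊤ : SimpleGraph (Fin n)) f = T.card.choose 2 := by
  classical
  apply le_antisymm
  · unfold monoEdgeCount
    rw [← count_edges_in T]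
    apply Finset.card_le_card
    intro e he
    simp only [Finset.mem_filter, mem_edgeFinset] at he ⊢
    exact ⟨he.1, fun v hv => (hT v).mpr (he.2 v hv)⟩
  · rw [← count_edges_in T]
    unfold monoEdgeCount
    apply Finset.card_le_card
    intro e he
    simp only [Finset.mem_filter, mem_edgeFinset] at he ⊢
    exact ⟨he.1, fun v hv => (hT v).mp (he.2 v hv)⟩

private lemma lower_bound {n : ℕ} (f : Fin n → Finset ℕ)
    (hf : IsWeakIASI (⊤ : SimpleGraph (Fin n)) f) :
    (n - 1) * (n - 2) / 2 ≤ monoEdgeCount (⊤ : SimpleGraph (Fin n)) f := by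
  classical
  set T : Finset (Fin n) := univ.filter (fun v => (f v).card = 1) with hTdef
  have hT1 : n - 1 ≤ T.card := by
    have hS : (univ.filter fun v : Fin n => ¬ (f v).card = 1).card ≤ 1 := by
      rw [Finset.card_le_one]
      intro u hu v hv
      by_contra hne
      have hadj : (⊤ : SimpleGraph (Fin n)).Adj u v := (top_adj u v).mpr hne
      have hw := hf.weak hadj
      have hcd := cauchy_davenport_add_of_linearOrder_isCancelAdd
        (hf.nonempty u) (hf.nonempty v)
      have h1 : 1 ≤ (f u).card := Finset.card_pos.mpr (hf.nonempty u)
      have h2 : 1 ≤ (f v).card := Finset.card_pos.mpr (hf.nonempty v)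
      simp only [Finset.mem_filter, Finset.mem_univ, true_and] at hu hv
      rcases max_choice (f u).card (f v).card with hm | hm <;> rw [hm] at hw <;> omega
    have hsplit := Finset.card_filter_add_card_filter_not
      (s := (univ : Finset (Fin n))) (p := fun v => (f v).card = 1)
    rw [Finset.card_univ, Fintype.card_fin, ← hTdef] at hsplit
    omega
  calc (n - 1) * (n - 2) / 2 = (n - 1).choose 2 := by
        rw [Nat.choose_two_right]
        have h2 : n - 1 - 1 = n - 2 := by omega
        rw [h2]
    _ ≤ T.card.choose 2 := Nat.choose_le_choose 2 hT1
    _ = (((⊤ : SimpleGraph (Fin n)).edgeFinset).filter fun e => ∀ v ∈ e, v ∈ T).card :=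
        (count_edges_in T).symm
    _ ≤ monoEdgeCount (⊤ : SimpleGraph (Fin n)) f := by
        unfold monoEdgeCount
        apply Finset.card_le_card
        intro e he
        simp only [Finset.mem_filter, mem_edgeFinset] at he ⊢
        refine ⟨he.1, fun v hv => ?_⟩
        have hmem := he.2 v hv
        rw [hTdef, Finset.mem_filter] at hmem
        exact hmem.2

/-- The sparing number of the complete graph `Kₙ` is `(n-1)(n-2)/2`. -/
theorem sparing_number_completeGraph (n : ℕ) :
    IsLeast (monoCounts (⊤ : SimpleGraph (Fin n))) ((n - 1) * (n - 2) / 2) := by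
  classical
  constructor
  · refine ⟨specF n, specF_isWeak n, ?_⟩
    have hT : ∀ v : Fin n,
        v ∈ (univ.filter fun v : Fin n => ¬ (v : ℕ) = n - 1) ↔ (specF n v).card = 1 := by
      intro v
      rw [Finset.mem_filter, specF_card]
      by_cases h : (v : ℕ) = n - 1 <;> simp [h]
    rw [mono_count_eq (specF n) _ hT]
    have hcardT : (univ.filter fun v : Fin n => ¬ (v : ℕ) = n - 1).card = n - 1 := by
      match n with
      | 0 => simp
      | (m + 1) =>
        have hpos : (univ.filter fun v : Fin (m + 1) => (v : ℕ) = m + 1 - 1).card = 1 := by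
          rw [Finset.card_eq_one]
          refine ⟨⟨m, Nat.lt_succ_self m⟩, ?_⟩
          ext v
          simp [Fin.ext_iff]
        rw [Finset.filter_not, Finset.card_sdiff_of_subset (Finset.filter_subset _ _),
          Finset.card_univ, Fintype.card_fin, hpos]
    rw [hcardT, Nat.choose_two_right]
    have h2 : n - 1 - 1 = n - 2 := by omega
    rw [h2]
  · rintro k ⟨f, hf, rfl⟩
    exact lower_bound f hf
end

section
/- For all positive integers m and n, the sparing number of the planar grid P_m × P_n (the cartesian product of the paths P_m and P_n) is 0. -/
set_option maxHeartbeats 1000000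


open Finset SimpleGraph
open scoped Pointwise

lemma pow3_inj : Function.Injective (fun k : ℕ => 3 ^ k) :=
  fun _ _ h => Nat.pow_right_injective (by norm_num) h

lemma pow3_ne_two_mul (a b : ℕ) : (3:ℕ) ^ a ≠ 2 * 3 ^ b := by
  rcases le_or_gt a b with h | h
  · have := Nat.pow_le_pow_right (show 1 ≤ 3 by norm_num) h
    have : (0:ℕ) < 3 ^ a := Nat.pow_pos (by norm_num)
    omega
  · have h1 : (3:ℕ) ^ (b+1) ≤ 3 ^ a := Nat.pow_le_pow_right (by norm_num) h
    have h2 : (3:ℕ) ^ (b+1) = 3 * 3 ^ b := by ring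
    have : (0:ℕ) < 3 ^ b := Nat.pow_pos (by norm_num)
    omega

lemma pair_add_single (x y s : ℕ) : ({x, y} : Finset ℕ) + {s} = {x + s, y + s} := by
  ext t
  simp [Finset.mem_add]
  omega

lemma pair_eq {a b c d : ℕ} (hab : a < b) (hcd : c < d)
    (h : ({a, b} : Finset ℕ) = {c, d}) : a = c ∧ b = d := by
  have h1 : a ∈ ({c, d} : Finset ℕ) := by rw [← h]; simp
  have h2 : b ∈ ({c, d} : Finset ℕ) := by rw [← h]; simp
  have h3 : c ∈ ({a, b} : Finset ℕ) := by rw [h]; simp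
  simp at h1 h2 h3
  omega

/-- encoding of grid vertices into ℕ -/
def gridEnc {m n : ℕ} (v : Fin (m+1) × Fin (n+1)) : ℕ :=
  (finProdFinEquiv v : Fin ((m+1) * (n+1))).val

lemma gridEnc_inj {m n : ℕ} : Function.Injective (gridEnc (m := m) (n := n)) :=
  fun _ _ h => finProdFinEquiv.injective (Fin.val_injective h)

/-- the labeling -/
def gridLabel {m n : ℕ} (v : Fin (m+1) × Fin (n+1)) : Finset ℕ :=
  if (v.1.val + v.2.val) % 2 = 0 then
    {3 ^ gridEnc v, 2 * 3 ^ gridEnc v}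
  else {3 ^ gridEnc v}

lemma gridLabel_even {m n : ℕ} {v : Fin (m+1) × Fin (n+1)}
    (h : (v.1.val + v.2.val) % 2 = 0) :
    gridLabel v = {3 ^ gridEnc v, 2 * 3 ^ gridEnc v} := by
  simp [gridLabel, h]

lemma gridLabel_odd {m n : ℕ} {v : Fin (m+1) × Fin (n+1)}
    (h : (v.1.val + v.2.val) % 2 ≠ 0) :
    gridLabel v = {3 ^ gridEnc v} := by
  simp [gridLabel, h]

lemma gridLabel_mem {m n : ℕ} (v : Fin (m+1) × Fin (n+1)) :
    3 ^ gridEnc v ∈ gridLabel v := by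
  unfold gridLabel; split <;> simp

lemma gridLabel_subset {m n : ℕ} (v : Fin (m+1) × Fin (n+1)) :
    gridLabel v ⊆ {3 ^ gridEnc v, 2 * 3 ^ gridEnc v} := by
  unfold gridLabel; split <;> simp [Finset.insert_subset_iff]

lemma gridLabel_card_even {m n : ℕ} {v : Fin (m+1) × Fin (n+1)}
    (h : (v.1.val + v.2.val) % 2 = 0) : (gridLabel v).card = 2 := by
  rw [gridLabel_even h]
  exact Finset.card_pair (pow3_ne_two_mul _ _)

lemma parity_flip {m n : ℕ} {u v : Fin (m+1) × Fin (n+1)}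
    (h : (pathGraph (m + 1) □ pathGraph (n + 1)).Adj u v) :
    (u.1.val + u.2.val) % 2 ≠ (v.1.val + v.2.val) % 2 := by
  rw [boxProd_adj] at h
  rcases h with ⟨h1, h2⟩ | ⟨h1, h2⟩
  · rw [pathGraph_adj] at h1
    have h2' : u.2.val = v.2.val := by rw [h2]
    omega
  · rw [pathGraph_adj] at h1
    have h2' : u.1.val = v.1.val := by rw [h2]
    omega

/-- sumset along an edge, with the even endpoint first -/
lemma gridLabel_add {m n : ℕ} {u v : Fin (m+1) × Fin (n+1)}
    (hu : (u.1.val + u.2.val) % 2 = 0) (hv : (v.1.val + v.2.val) % 2 ≠ 0) :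
    gridLabel u + gridLabel v =
      {3 ^ gridEnc u + 3 ^ gridEnc v, 2 * 3 ^ gridEnc u + 3 ^ gridEnc v} := by
  rw [gridLabel_even hu, gridLabel_odd hv, pair_add_single]

lemma gridLabel_add_lt {m n : ℕ} (u v : Fin (m+1) × Fin (n+1)) :
    3 ^ gridEnc u + 3 ^ gridEnc v < 2 * 3 ^ gridEnc u + 3 ^ gridEnc v := by
  have : (0:ℕ) < 3 ^ gridEnc u := Nat.pow_pos (by norm_num)
  omega

/-- From equality of canonical edge sumsets, deduce equal endpoints. -/
lemma gridLabel_edge_eq {m n : ℕ} {u v x y : Fin (m+1) × Fin (n+1)}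
    (h : ({3 ^ gridEnc u + 3 ^ gridEnc v, 2 * 3 ^ gridEnc u + 3 ^ gridEnc v} : Finset ℕ)
       = {3 ^ gridEnc x + 3 ^ gridEnc y, 2 * 3 ^ gridEnc x + 3 ^ gridEnc y}) :
    u = x ∧ v = y := by
  obtain ⟨h1, h2⟩ := pair_eq (gridLabel_add_lt u v) (gridLabel_add_lt x y) h
  have hux : (3:ℕ) ^ gridEnc u = 3 ^ gridEnc x := by omega
  have hvy : (3:ℕ) ^ gridEnc v = 3 ^ gridEnc y := by omega
  exact ⟨gridEnc_inj (pow3_inj hux), gridEnc_inj (pow3_inj hvy)⟩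

/-- For positive integers `m`, `n`, the sparing number of the planar grid
`Pₘ □ Pₙ` is `0` (where `Pₘ`, the path of length `m`, has `m + 1` vertices). -/
theorem sparing_number_grid (m n : ℕ) (hm : 0 < m) (hn : 0 < n) :
    IsLeast (monoCounts (pathGraph (m + 1) □ pathGraph (n + 1))) 0 := by
  constructor
  · refine ⟨gridLabel, ⟨?_, ?_, ?_, ?_⟩, ?_⟩
    · -- nonempty
      intro v
      unfold gridLabel
      split
      · exact Finset.insert_nonempty _ _
      · exact Finset.singleton_nonempty _
    · -- injective
      intro u v h
      have hmem : 3 ^ gridEnc u ∈ gridLabel v := h ▸ gridLabel_mem u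
      have hsub := gridLabel_subset v hmem
      simp only [Finset.mem_insert, Finset.mem_singleton] at hsub
      rcases hsub with h1 | h1
      · exact gridEnc_inj (pow3_inj h1)
      · exact absurd h1 (pow3_ne_two_mul _ _)
    · -- edgeInjective
      intro u v x y huv hxy h
      have p1 := parity_flip huv
      have p2 := parity_flip hxy
      rcases Nat.eq_zero_or_pos ((u.1.val + u.2.val) % 2) with hu | hu
      · have hv : (v.1.val + v.2.val) % 2 ≠ 0 := fun hv => p1 (by omega)
        rw [gridLabel_add hu hv] at h
        rcases Nat.eq_zero_or_pos ((x.1.val + x.2.val) % 2) with hx | hx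
        · have hy : (y.1.val + y.2.val) % 2 ≠ 0 := fun hy => p2 (by omega)
          rw [gridLabel_add hx hy] at h
          obtain ⟨e1, e2⟩ := gridLabel_edge_eq h
          rw [e1, e2]
        · have hx' : (x.1.val + x.2.val) % 2 ≠ 0 := by omega
          have hy : (y.1.val + y.2.val) % 2 = 0 := by omega
          rw [add_comm (gridLabel x), gridLabel_add hy hx'] at h
          obtain ⟨e1, e2⟩ := gridLabel_edge_eq h
          rw [e1, e2, Sym2.eq_swap]
      · have hu' : (u.1.val + u.2.val) % 2 ≠ 0 := by omega
        have hv : (v.1.val + v.2.val) % 2 = 0 := by omega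
        rw [add_comm (gridLabel u), gridLabel_add hv hu'] at h
        rcases Nat.eq_zero_or_pos ((x.1.val + x.2.val) % 2) with hx | hx
        · have hy : (y.1.val + y.2.val) % 2 ≠ 0 := fun hy => p2 (by omega)
          rw [gridLabel_add hx hy] at h
          obtain ⟨e1, e2⟩ := gridLabel_edge_eq h
          rw [e1, e2, Sym2.eq_swap]
        · have hx' : (x.1.val + x.2.val) % 2 ≠ 0 := by omega
          have hy : (y.1.val + y.2.val) % 2 = 0 := by omega
          rw [add_comm (gridLabel x), gridLabel_add hy hx'] at h
          obtain ⟨e1, e2⟩ := gridLabel_edge_eq h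
          rw [e1, e2]
    · -- weak
      intro u v huv
      have p1 := parity_flip huv
      rcases Nat.eq_zero_or_pos ((u.1.val + u.2.val) % 2) with hu | hu
      · have hv : (v.1.val + v.2.val) % 2 ≠ 0 := fun hv => p1 (by omega)
        rw [gridLabel_add hu hv, gridLabel_even hu, gridLabel_odd hv,
          Finset.card_pair (by have := gridLabel_add_lt u v; omega),
          Finset.card_pair (pow3_ne_two_mul _ _), Finset.card_singleton]
        rfl
      · have hu' : (u.1.val + u.2.val) % 2 ≠ 0 := by omega
        have hv : (v.1.val + v.2.val) % 2 = 0 := by omega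
        rw [add_comm (gridLabel u), gridLabel_add hv hu', gridLabel_even hv,
          gridLabel_odd hu',
          Finset.card_pair (by have := gridLabel_add_lt v u; omega),
          Finset.card_pair (pow3_ne_two_mul _ _), Finset.card_singleton]
        rfl
    · -- monoEdgeCount = 0
      classical
      unfold monoEdgeCount
      rw [Finset.card_eq_zero, Finset.eq_empty_iff_forall_notMem]
      intro e he
      simp only [Finset.mem_filter, mem_edgeFinset] at he
      obtain ⟨he, hall⟩ := he
      induction e using Sym2.ind with
      | _ u v =>
        rw [mem_edgeSet] at he
        have p1 := parity_flip he
        have h1 := hall u (Sym2.mem_mk_left u v)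
        have h2 := hall v (Sym2.mem_mk_right u v)
        rcases Nat.eq_zero_or_pos ((u.1.val + u.2.val) % 2) with hu | hu
        · rw [gridLabel_card_even hu] at h1; omega
        · have hv : (v.1.val + v.2.val) % 2 = 0 := by omega
          rw [gridLabel_card_even hv] at h2; omega
  · intro k _
    exact Nat.zero_le k
end
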